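/- If u·v is a factor of w^m for some primitive word w, then exp_w(u·v) equals exp_w(u) + exp_w(v) or exp_w(u) + exp_w(v) + 1. -/

import Mathlib

/-- `wpow w n` is the `n`-fold concatenation `w^n` of the word `w` (a list), with `w^0 = []`. -/
def wpow {α : Type*} (w : List α) (n : ℕ) : List α := (List.replicate n w).flatten

/-- A nonempty word is primitive if it is not a power of any word other than itself. -/
def Primitive {α : Type*} (w : List α) : Prop :=
  w ≠ [] ∧ ∀ (z : List α) (m : ℕ), z ≠ [] → w = wpow z m → w = z

/-- `expw w u` is the maximal `m` such that `w^m` is a factor of `u`. -/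
noncomputable def expw {α : Type*} (w u : List α) : ℕ := sSup {m : ℕ | wpow w m <:+: u}

/-- Two words are conjugate if `w = x·y` and `v = y·x`. -/
def Conj {α : Type*} (w v : List α) : Prop := ∃ x y : List α, w = x ++ y ∧ v = y ++ x

theorem wpow_succ {α : Type*} (w : List α) (k : ℕ) : wpow w (k+1) = w ++ wpow w k := by
  simp [wpow, List.replicate_succ]

theorem wpow_add {α : Type*} (w : List α) (a b : ℕ) :
    wpow w (a+b) = wpow w a ++ wpow w b := by
  induction a with
  | zero => simp [wpow]
  | succ a ih => rw [Nat.succ_add, wpow_succ, wpow_succ, ih, List.append_assoc]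

theorem length_wpow {α : Type*} (w : List α) (k : ℕ) :
    (wpow w k).length = k * w.length := by
  induction k with
  | zero => simp [wpow]
  | succ k ih => rw [wpow_succ]; simp [ih, Nat.succ_mul]; ring

theorem getElem?_wpow {α : Type*} (w : List α) (k i : ℕ) (h : i < k * w.length) :
    (wpow w k)[i]? = w[i % w.length]? := by
  induction k generalizing i with
  | zero => omega
  | succ k ih =>
    rw [Nat.succ_mul] at h
    rw [wpow_succ]
    rcases lt_or_ge i w.length with h1 | h1
    · rw [List.getElem?_append_left h1, Nat.mod_eq_of_lt h1]
    · rw [List.getElem?_append_right h1, ih (i - w.length) (by omega),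
        Nat.mod_eq_sub_mod h1]

theorem slice_eq {α : Type*} (x y z : List α) :
    ((x ++ y ++ z).drop x.length).take y.length = y := by
  rw [List.append_assoc, List.drop_left, List.take_left]

theorem infix_slice {α : Type*} (W : List α) (p₁ l₁ p₂ l₂ : ℕ) (h1 : p₂ ≤ p₁)
    (h2 : p₁ + l₁ ≤ p₂ + l₂) : ((W.drop p₁).take l₁) <:+: ((W.drop p₂).take l₂) := by
  have key : ((W.drop p₂).take l₂).drop (p₁ - p₂) = (W.drop p₁).take (l₂ - (p₁ - p₂)) := by
    rw [List.drop_take, List.drop_drop]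
    congr 2
    omega
  have : (W.drop p₁).take l₁ = (((W.drop p₂).take l₂).drop (p₁ - p₂)).take l₁ := by
    rw [key, List.take_take, min_eq_left (by omega)]
  rw [this]
  exact ((List.take_prefix _ _).isInfix).trans ((List.drop_suffix _ _).isInfix)

theorem not_primitive_of_rot {α : Type*} (w : List α) (r : ℕ) (hr0 : 0 < r)
    (hrn : r < w.length) (hrot : ∀ i < w.length, w[i]? = w[(i + r) % w.length]?) :
    ¬ Primitive w := by
  set n := w.length with hn_def
  have hn : 0 < n := by omega
  -- iterate the rotation
  have iter : ∀ k, ∀ i < n, w[i]? = w[(i + k * r) % n]? := by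
    intro k
    induction k with
    | zero => intro i hi; simp [Nat.mod_eq_of_lt hi]
    | succ k ih =>
      intro i hi
      have h1 := ih i hi
      have h2 := hrot ((i + k * r) % n) (Nat.mod_lt _ hn)
      rw [h1, h2, Nat.mod_add_mod]
      congr 2
      ring
  set d := Nat.gcd r n with hd_def
  have hd0 : 0 < d := Nat.gcd_pos_of_pos_left n hr0
  have hdr : d ≤ r := Nat.le_of_dvd hr0 (Nat.gcd_dvd_left r n)
  have hdn : d ∣ n := Nat.gcd_dvd_right r n
  -- Bezout: find k with (k*r) % n = d % n
  have bez : ∃ k : ℕ, (k * r) % n = d % n := by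
    set x := Nat.gcdA r n with hx
    set y := Nat.gcdB r n with hy
    have hb : (d : ℤ) = r * x + n * y := Nat.gcd_eq_gcd_ab r n
    refine ⟨(x % n).toNat, ?_⟩
    have hxnn : (0:ℤ) ≤ x % n := Int.emod_nonneg x (by exact_mod_cast hn.ne')
    have hcast : ((x % n).toNat : ℤ) = x % n := Int.toNat_of_nonneg hxnn
    have key : ((x % n).toNat * r : ℤ) % n = (d : ℤ) % n := by
      push_cast [hcast]
      rw [Int.mul_emod, Int.emod_emod_of_dvd x dvd_rfl]
      rw [← Int.mul_emod]
      have : x * r = (d : ℤ) - n * y := by linarith [hb]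
      rw [this]
      simp [Int.sub_emod, Int.mul_emod_right]
    have := key
    rw [← Nat.cast_mul] at this
    omega
  obtain ⟨k, hk⟩ := bez
  have hdn' : d < n := by omega
  have stepd : ∀ i < n, w[i]? = w[(i + d) % n]? := by
    intro i hi
    rw [iter k i hi]
    congr 1
    exact Nat.ModEq.add_left i hk
  -- w[i]? = w[i % d]? for i < n
  have modd : ∀ i, i < n → w[i]? = w[i % d]? := by
    intro i
    induction i using Nat.strong_induction_on with
    | _ i ih =>
      intro hi
      rcases lt_or_ge i d with h1 | h1
      · rw [Nat.mod_eq_of_lt h1]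
      · have h2 : i - d < n := by omega
        have h3 := stepd (i - d) h2
        have h4 : (i - d + d) % n = i := by rw [Nat.sub_add_cancel h1, Nat.mod_eq_of_lt hi]
        rw [h4] at h3
        rw [← h3, ih (i - d) (by omega) h2, Nat.mod_eq_sub_mod h1]
  -- conclude w = wpow (w.take d) (n / d)
  have hlt : (w.take d).length = d := by
    rw [List.length_take]; omega
  have hne : w.take d ≠ [] := by
    intro h; rw [h] at hlt; simp at hlt; omega
  have hw_eq : w = wpow (w.take d) (n / d) := by
    apply List.ext_getElem?
    intro i
    rcases lt_or_ge i n with hi | hi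
    · have hilen : i < (n / d) * (w.take d).length := by
        rw [hlt, Nat.div_mul_cancel hdn]; exact hi
      rw [getElem?_wpow _ _ _ hilen, hlt, List.getElem?_take_of_lt (Nat.mod_lt _ hd0)]
      exact modd i hi
    · rw [List.getElem?_eq_none (by omega), List.getElem?_eq_none]
      rw [length_wpow, hlt, Nat.div_mul_cancel hdn]; omega
  intro hp
  have := hp.2 (w.take d) (n / d) hne hw_eq
  have : w.length = d := by rw [this, hlt]
  omega

/-- synchronization: an occurrence of a primitive `w` inside `wpow w m` is at a
multiple of `w.length`. -/
theorem sync {α : Type*} (w : List α) (hw : Primitive w) (m : ℕ) (s t : List α)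
    (heq : s ++ w ++ t = wpow w m) : w.length ∣ s.length := by
  set n := w.length with hn_def
  have hn : 0 < n := List.length_pos_iff.mpr hw.1
  set p := s.length with hp_def
  have hlen : p + n + t.length = m * n := by
    have h := congrArg List.length heq
    simp only [List.length_append, length_wpow, ← hn_def, ← hp_def] at h
    omega
  have hocc : ∀ i < n, w[i]? = w[(p + i) % n]? := by
    intro i hi
    have h1 : (s ++ w ++ t)[p + i]? = w[i]? := by
      rw [List.append_assoc, List.getElem?_append_right (by omega : s.length ≤ p + i)]
      rw [List.getElem?_append_left (by simp [← hp_def, ← hn_def]; omega :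
        p + i - s.length < w.length)]
      congr 1
      simp [← hp_def]
    have h2 : (wpow w m)[p + i]? = w[(p + i) % n]? := by
      rw [getElem?_wpow w m (p + i) (by rw [← hn_def]; omega)]
    rw [← h1, heq, h2]
  set r := p % n with hr_def
  rcases Nat.eq_zero_or_pos r with hr | hr
  · exact Nat.dvd_of_mod_eq_zero hr
  · exfalso
    apply not_primitive_of_rot w r hr (hr_def ▸ Nat.mod_lt _ hn) _ hw
    intro i hi
    rw [← hn_def] at hi ⊢
    rw [hocc i hi]
    congr 1
    calc (p + i) % n = (i + p) % n := by rw [Nat.add_comm]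
      _ = (i + r) % n := (Nat.ModEq.add_left i (hr_def ▸ Nat.mod_modEq p n)).symm

/-- The exponent formula for factors of `wpow w m`. -/
theorem expw_formula {α : Type*} (w : List α) (hw : Primitive w) (m : ℕ) (z s t : List α)
    (heq : s ++ z ++ t = wpow w m) :
    expw w z = (s.length + z.length) / w.length - (s.length + w.length - 1) / w.length := by
  set n := w.length with hn_def
  have hn : 0 < n := List.length_pos_iff.mpr hw.1
  set i := s.length with hi_def
  set L := z.length with hL_def
  set a := (i + n - 1) / n with ha_def
  set b := (i + L) / n with hb_def
  have hlen : i + L + t.length = m * n := by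
    have h := congrArg List.length heq
    simp only [List.length_append, length_wpow, ← hn_def, ← hi_def, ← hL_def] at h
    omega
  have hain : i ≤ a * n := by
    have h1 := Nat.div_add_mod (i + n - 1) n
    have h2 := Nat.mod_lt (i + n - 1) hn
    rw [← ha_def] at h1
    have h3 : n * a = a * n := Nat.mul_comm n a
    omega
  have hbn : b * n ≤ i + L := by
    have := Nat.div_mul_le_self (i + L) n
    rw [← hb_def] at this
    exact this
  have hbm : b ≤ m := by
    have h1 : (i + L) / n ≤ (m * n) / n := Nat.div_le_div_right (by omega)
    rw [← hb_def, Nat.mul_div_cancel _ hn] at h1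
    exact h1
  apply IsGreatest.csSup_eq
  constructor
  · -- membership : wpow w (b - a) <:+: z
    show wpow w (b - a) <:+: z
    rcases le_or_gt a b with hab | hab
    · have hdecomp : wpow w m = wpow w a ++ wpow w (b - a) ++ wpow w (m - b) := by
        rw [← wpow_add, ← wpow_add]
        congr 1
        omega
      have hslice1 : ((wpow w m).drop (a * n)).take ((b - a) * n) = wpow w (b - a) := by
        conv_lhs => rw [hdecomp]
        rw [show a * n = (wpow w a).length by rw [length_wpow, ← hn_def],
          show (b - a) * n = (wpow w (b - a)).length by rw [length_wpow, ← hn_def]]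
        exact slice_eq _ _ _
      have hslice2 : ((wpow w m).drop i).take L = z := by
        conv_lhs => rw [← heq]
        rw [show i = s.length from hi_def, show L = z.length from hL_def]
        exact slice_eq _ _ _
      rw [← hslice1, ← hslice2]
      apply infix_slice _ _ _ _ _ hain
      have h : a * n + (b - a) * n = b * n := by
        rw [← Nat.add_mul]
        congr 1
        omega
      omega
    · have h : b - a = 0 := by omega
      rw [h]
      show wpow w 0 <:+: z
      simp [wpow]
  · -- upper bound
    intro k hk
    rcases Nat.eq_zero_or_pos k with hk0 | hk0
    · omega
    obtain ⟨s', t', heq2⟩ := hk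
    have hL' : s'.length + k * n + t'.length = L := by
      have h := congrArg List.length heq2
      simp only [List.length_append, length_wpow, ← hn_def, ← hL_def] at h
      omega
    have heq3 : (s ++ s') ++ w ++ (wpow w (k - 1) ++ t' ++ t) = wpow w m := by
      have hks : wpow w k = w ++ wpow w (k - 1) := by
        conv_lhs => rw [show k = (k - 1) + 1 by omega]
        exact wpow_succ w (k - 1)
      rw [← heq, ← heq2, hks]
      simp [List.append_assoc]
    obtain ⟨c, hc⟩ := sync w hw m _ _ heq3
    have hc' : i + s'.length = n * c := by
      rw [← hc]
      simp [← hn_def, ← hi_def]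
    have hac : a ≤ c := by
      have h1 : i + n - 1 ≤ n * c + (n - 1) := by omega
      have h2 : a ≤ (n * c + (n - 1)) / n := by
        rw [ha_def]
        exact Nat.div_le_div_right h1
      rw [Nat.mul_add_div hn, Nat.div_eq_of_lt (by omega : n - 1 < n), Nat.add_zero] at h2
      exact h2
    have hck : c + k ≤ b := by
      rw [hb_def, Nat.le_div_iff_mul_le hn, Nat.add_mul]
      have hcc : c * n = n * c := Nat.mul_comm c n
      omega
    omega

theorem stmt_3 {α : Type*} (w : List α) (hw : Primitive w) (m : ℕ) (u v : List α)
    (huv : u ++ v <:+: wpow w m) :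
    expw w (u ++ v) = expw w u + expw w v ∨
      expw w (u ++ v) = expw w u + expw w v + 1 := by
  obtain ⟨s, t, heq⟩ := huv
  set n := w.length with hn_def
  have hn : 0 < n := List.length_pos_iff.mpr hw.1
  have heq_u : s ++ u ++ (v ++ t) = wpow w m := by
    rw [← heq]; simp [List.append_assoc]
  have heq_v : (s ++ u) ++ v ++ t = wpow w m := by
    rw [← heq]; simp [List.append_assoc]
  have e_uv := expw_formula w hw m (u ++ v) s t heq
  have e_u := expw_formula w hw m u s (v ++ t) heq_u
  have e_v := expw_formula w hw m v (s ++ u) t heq_v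
  simp only [List.length_append] at e_uv e_u e_v
  set i := s.length with hi_def
  set j := i + u.length with hj_def
  set l := j + v.length with hl_def
  rw [show i + (u.length + v.length) = l by omega] at e_uv
  set ci := (i + n - 1) / n with hci_def
  set cj := (j + n - 1) / n with hcj_def
  set fj := j / n with hfj_def
  set fl := l / n with hfl_def
  rw [e_uv, e_u, e_v]
  have h1 : ci ≤ cj := Nat.div_le_div_right (by omega)
  have h2 : fj ≤ fl := Nat.div_le_div_right (by omega)
  have h3 : fj ≤ cj := Nat.div_le_div_right (by omega)
  have h4 : cj ≤ fj + 1 := by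
    have h5 : (j + n - 1) / n ≤ (j + n) / n := Nat.div_le_div_right (by omega)
    rw [Nat.add_div_right j hn] at h5
    exact h5
  omega
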